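/- arXiv:2405.09661 — 4 statements merged into one kernel-verified Lean document; each statement's English description precedes it below -/
import Mathlib

section
/- Let n ≥ 2, let Ω ⊆ ℝⁿ be open, let f : Ω → [0,∞) be locally integrable on Ω, let K ⊂ Ω be compact, let δ₀ ∈ (0, dist(K, ∂Ω)), and let ε > 0. Suppose S ⊆ K is a set such that ∫_{B_ρ(y)} f ≥ ε ρ^{n−2} for every y ∈ S and every 0 < ρ < δ₀. Then the (n−2)-dimensional Hausdorff measure of S is zero: H^{n−2}(S) = 0. -/
open MeasureTheory Metric Filter Set

open scoped ENNReal NNReal Topology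

private abbrev Y (n : ℕ) := EuclideanSpace ℝ (Fin n)

/-- The covering-argument form of Theorem 6 of the paper: if `f : Ω → [0,∞)` is
locally integrable on the open set `Ω ⊆ ℝⁿ` (`n ≥ 2`), `K ⊂ Ω` is compact,
`0 < δ₀ < dist(K, ∂Ω)`, `ε > 0`, and `S ⊆ K` is a set with
`∫_{B_ρ(y)} f ≥ ε ρ^(n-2)` for all `y ∈ S` and `0 < ρ < δ₀`, then the
`(n-2)`-dimensional Hausdorff measure of `S` vanishes. -/
theorem lower_energy_bound_hausdorff_null
    (n : ℕ) (hn : 2 ≤ n)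
    (Ω : Set (EuclideanSpace ℝ (Fin n))) (hΩ : IsOpen Ω)
    (f : EuclideanSpace ℝ (Fin n) → ℝ)
    (hf0 : ∀ x ∈ Ω, 0 ≤ f x)
    (hfloc : LocallyIntegrableOn f Ω volume)
    (K : Set (EuclideanSpace ℝ (Fin n))) (hK : IsCompact K) (hKΩ : K ⊆ Ω)
    (δ₀ : ℝ) (hδ₀ : 0 < δ₀) (hδ₀dist : ∀ y ∈ K, δ₀ < infDist y Ωᶜ)
    (ε : ℝ) (hε : 0 < ε)
    (S : Set (EuclideanSpace ℝ (Fin n))) (hSK : S ⊆ K)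
    (hlow : ∀ y ∈ S, ∀ ρ : ℝ, 0 < ρ → ρ < δ₀ →
      ε * ρ ^ ((n : ℝ) - 2) ≤ ∫ x in ball y ρ, f x) :
    μH[(n : ℝ) - 2] S = 0 := by
  set d : ℝ := (n : ℝ) - 2 with hdd
  have hd : (0:ℝ) ≤ d := by
    have : (2:ℝ) ≤ (n:ℝ) := by exact_mod_cast hn
    simp only [hdd]; linarith
  -- the compact neighborhood K'
  set K' : Set (Y n) := cthickening δ₀ K with hK'def
  have hK'comp : IsCompact K' := by rw [hK'def]; exact hK.cthickening
  have hK'eq : K' = ⋃ y ∈ K, closedBall y δ₀ := by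
    rw [hK'def]; exact hK.cthickening_eq_biUnion_closedBall hδ₀.le
  have hK'Ω : K' ⊆ Ω := by
    rw [hK'eq]
    intro x hx
    simp only [mem_iUnion] at hx
    obtain ⟨y, hyK, hxy⟩ := hx
    by_contra hxΩ
    have h1 : infDist y Ωᶜ ≤ dist y x := infDist_le_dist_of_mem hxΩ
    have h2 : dist y x ≤ δ₀ := by rw [dist_comm]; exact mem_closedBall.1 hxy
    exact absurd (hδ₀dist y hyK) (not_lt.2 (h1.trans h2))
  have hK'meas : MeasurableSet K' := by rw [hK'def]; exact isClosed_cthickening.measurableSet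
  have hfK' : IntegrableOn f K' volume :=
    hfloc.integrableOn_compact_subset hK'Ω hK'comp
  have hballK' : ∀ b ∈ K, ∀ δ : ℝ, δ ≤ δ₀ → ball b δ ⊆ K' := by
    intro b hb δ hδ
    exact (ball_subset_closedBall.trans (closedBall_subset_closedBall hδ)).trans
      (by rw [hK'def]; exact closedBall_subset_cthickening hb δ₀)
  have hnonneg : ∀ t : Set (Y n), MeasurableSet t → t ⊆ Ω →
      0 ≤ᵐ[volume.restrict t] f := by
    intro t ht hsub
    exact ae_restrict_of_forall_mem ht fun x hx => hf0 x (hsub hx)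
  -- the sets A δ
  set A : ℝ → Set (Y n) := fun δ => cthickening δ S ∩ K' with hAdef
  have hAmeas : ∀ δ, MeasurableSet (A δ) := fun δ =>
    (isClosed_cthickening.inter isClosed_cthickening).measurableSet
  have hAsub : ∀ δ, A δ ⊆ K' := fun δ => inter_subset_right
  have hfA : ∀ δ, IntegrableOn f (A δ) volume := fun δ =>
    hfK'.mono_set (hAsub δ)
  -- covering lemma
  have key : ∀ δ : ℝ, 0 < δ → δ < δ₀ → ∃ F : Finset (Y n), ↑F ⊆ S ∧
      (S ⊆ ⋃ b ∈ F, ball b (5*δ)) ∧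
      (F.card : ℝ) * (ε * δ ^ d) ≤ ∫ x in A δ, f x := by
    intro δ hδ hδδ₀
    obtain ⟨u, huS, hdisj, hcov⟩ :=
      Vitali.exists_disjoint_subfamily_covering_enlargement_closedBall S id
        (fun _ => δ) δ (fun _ _ => le_rfl) 4 (by norm_num)
    have hball : ∀ b ∈ u, ball (b : (Y n)) δ ⊆ A δ := by
      intro b hb
      refine subset_inter ((ball_subset_thickening (huS hb) δ).trans
        (thickening_subset_cthickening δ S)) ?_
      exact hballK' b (hSK (huS hb)) δ hδδ₀.le
    have hvle : ∀ v : Finset (Y n), ↑v ⊆ u →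
        (v.card : ℝ) * (ε * δ ^ d) ≤ ∫ x in A δ, f x := by
      intro v hv
      have h1 : ∀ b ∈ v, ε * δ ^ d ≤ ∫ x in ball b δ, f x := fun b hb =>
        hlow b (huS (hv hb)) δ hδ hδδ₀
      have hdisj' : Set.Pairwise ↑v (Function.onFun Disjoint fun b : (Y n) => ball b δ) := by
        intro b hb c hc hbc
        exact Disjoint.mono ball_subset_closedBall ball_subset_closedBall
          (hdisj (hv hb) (hv hc) hbc)
      calc (v.card : ℝ) * (ε * δ ^ d) = ∑ _b ∈ v, ε * δ ^ d := by
            rw [Finset.sum_const, nsmul_eq_mul]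
        _ ≤ ∑ b ∈ v, ∫ x in ball b δ, f x := Finset.sum_le_sum h1
        _ = ∫ x in ⋃ b ∈ v, ball b δ, f x :=
            (integral_biUnion_finset v (fun _ _ => measurableSet_ball) hdisj'
              (fun b hb => (hfA δ).mono_set (hball b (hv hb)))).symm
        _ ≤ ∫ x in A δ, f x := by
            refine setIntegral_mono_set (hfA δ)
              (hnonneg _ (hAmeas δ) ((hAsub δ).trans hK'Ω)) ?_
            exact (iUnion₂_subset fun b hb => hball b (hv hb)).eventuallyLE
    have hufin : u.Finite := by
      by_contra hinf
      obtain ⟨c, hc⟩ := exists_nat_gt ((∫ x in A δ, f x) / (ε * δ ^ d))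
      have hinf' : u.Infinite := hinf
      obtain ⟨v, hvu, hvcard⟩ := hinf'.exists_subset_card_eq c
      have hb := hvle v hvu
      rw [hvcard] at hb
      have hpos : 0 < ε * δ ^ d := mul_pos hε (Real.rpow_pos_of_pos hδ _)
      have : (c : ℝ) ≤ (∫ x in A δ, f x) / (ε * δ ^ d) := (le_div_iff₀ hpos).2 hb
      linarith
    refine ⟨hufin.toFinset, by simpa using huS, ?_, ?_⟩
    · intro a ha
      obtain ⟨b, hbu, hba⟩ := hcov a ha
      have hab : a ∈ closedBall (b : (Y n)) (4*δ) := hba (mem_closedBall_self hδ.le)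
      have : dist a b < 5 * δ := lt_of_le_of_lt (mem_closedBall.1 hab) (by linarith)
      exact mem_iUnion₂.2 ⟨b, hufin.mem_toFinset.2 hbu, this⟩
    · exact hvle hufin.toFinset (by simp)
  -- the sequence of scales
  set δk : ℕ → ℝ := fun k => δ₀ / ((k : ℝ) + 2) with hδkdef
  have hδkpos : ∀ k, 0 < δk k := fun k => div_pos hδ₀ (by positivity)
  have hδklt : ∀ k, δk k < δ₀ := by
    intro k
    have hk : (0:ℝ) ≤ (k:ℝ) := Nat.cast_nonneg k
    exact div_lt_self hδ₀ (by linarith)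
  have hδkanti : Antitone δk := by
    intro i j hij
    have : (i : ℝ) + 2 ≤ (j : ℝ) + 2 := by exact_mod_cast by omega
    exact div_le_div_of_nonneg_left hδ₀.le (by positivity) this
  have hδk0 : Tendsto δk atTop (𝓝 0) := by
    apply Tendsto.div_atTop tendsto_const_nhds
    exact tendsto_atTop_add_const_right atTop 2 tendsto_natCast_atTop_atTop
  have hkey : ∀ k : ℕ, ∃ F : Finset (Y n), ↑F ⊆ S ∧
      (S ⊆ ⋃ b ∈ F, ball b (5 * δk k)) ∧
      (F.card : ℝ) * (ε * δk k ^ d) ≤ ∫ x in A (δk k), f x :=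
    fun k => key (δk k) (hδkpos k) (hδklt k)
  choose F hFS hFcov hFcard using hkey
  set I : ℕ → ℝ := fun k => ∫ x in A (δk k), f x with hIdef
  set M : ℝ := ∫ x in K', f x with hMdef
  have hIM : ∀ k, I k ≤ M := by
    intro k
    exact setIntegral_mono_set hfK' (hnonneg _ hK'meas hK'Ω)
      ((hAsub (δk k)).eventuallyLE)
  have hcard' : ∀ k, ((F k).card : ℝ) * δk k ^ d ≤ ε⁻¹ * I k := by
    intro k
    have h1 := hFcard k
    have h2 : ((F k).card : ℝ) * δk k ^ d
        = (((F k).card : ℝ) * (ε * δk k ^ d)) * ε⁻¹ := by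
      field_simp
    rw [h2, mul_comm (ε⁻¹) (I k)]
    exact mul_le_mul_of_nonneg_right h1 (by positivity)
  -- volume of closure S is zero
  have hSclosub : ∀ k, closure S ⊆ ⋃ b ∈ F k, ball (b : (Y n)) (7 * δk k) := by
    intro k x hx
    have hx' : EMetric.infEdist x S ≤ ENNReal.ofReal (δk k) :=
      closure_subset_cthickening (δk k) S hx
    have hlt : EMetric.infEdist x S < ENNReal.ofReal (2 * δk k) :=
      lt_of_le_of_lt hx' (ENNReal.ofReal_lt_ofReal_iff (by positivity) |>.2
        (by linarith [hδkpos k]))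
    obtain ⟨s, hsS, hse⟩ := EMetric.infEdist_lt_iff.1 hlt
    have hds : dist x s < 2 * δk k := by
      rw [← ENNReal.ofReal_lt_ofReal_iff_of_nonneg dist_nonneg, ← edist_dist]
      exact hse
    obtain ⟨b, hbF, hsb⟩ := mem_iUnion₂.1 (hFcov k hsS)
    refine mem_iUnion₂.2 ⟨b, hbF, ?_⟩
    have : dist x b ≤ dist x s + dist s b := dist_triangle x s b
    have hsb' : dist s b < 5 * δk k := mem_ball.1 hsb
    exact mem_ball.2 (by linarith)
  have hnt : Nontrivial (Y n) := by
    have : Nonempty (Fin n) := ⟨⟨0, by omega⟩⟩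
    infer_instance
  set B : ℝ≥0∞ := volume (ball (0 : (Y n)) 1) with hBdef
  have hBne : B ≠ ⊤ := measure_ball_lt_top.ne
  have hvolball : ∀ (b : (Y n)) (r : ℝ), 0 ≤ r →
      volume (ball b r) = ENNReal.ofReal (r ^ n) * B := by
    intro b r hr
    rw [Measure.addHaar_ball volume b hr, finrank_euclideanSpace_fin]
  have hpowsplit : ∀ k, (δk k : ℝ) ^ n = δk k ^ d * δk k ^ 2 := by
    intro k
    have h1 : (δk k : ℝ) ^ n = δk k ^ ((n : ℝ)) := (Real.rpow_natCast _ n).symm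
    have h2 : ((n:ℝ)) = d + 2 := by simp [hdd]
    rw [h1, h2, Real.rpow_add (hδkpos k), show ((2:ℝ)) = ((2:ℕ):ℝ) by norm_num,
      Real.rpow_natCast]
  have hM0 : 0 ≤ M := setIntegral_nonneg hK'meas fun x hx => hf0 x (hK'Ω hx)
  have hSnull : volume (closure S) = 0 := by
    have hub : ∀ k, volume (closure S) ≤
        ENNReal.ofReal (7 ^ n * (ε⁻¹ * M) * δk k ^ 2) * B := by
      intro k
      calc volume (closure S) ≤ volume (⋃ b ∈ F k, ball (b : (Y n)) (7 * δk k)) :=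
            measure_mono (hSclosub k)
        _ ≤ ∑ b ∈ F k, volume (ball (b : (Y n)) (7 * δk k)) :=
            measure_biUnion_finset_le _ _
        _ = ((F k).card : ℝ≥0∞) * (ENNReal.ofReal ((7 * δk k) ^ n) * B) := by
            rw [Finset.sum_congr rfl fun b _ => hvolball b (7 * δk k)
              (by positivity), Finset.sum_const, nsmul_eq_mul]
        _ = ENNReal.ofReal (((F k).card : ℝ) * (7 * δk k) ^ n) * B := by
            rw [ENNReal.ofReal_mul (p := (((F k).card : ℕ) : ℝ)) (by positivity), ENNReal.ofReal_natCast,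
              mul_assoc]
        _ ≤ ENNReal.ofReal (7 ^ n * (ε⁻¹ * M) * δk k ^ 2) * B := by
            refine mul_le_mul_left (ENNReal.ofReal_le_ofReal ?_) B
            have h1 : ((F k).card : ℝ) * (7 * δk k) ^ n
                = 7 ^ n * (((F k).card : ℝ) * δk k ^ d * δk k ^ 2) := by
              rw [mul_pow, hpowsplit k]; ring
            rw [h1]
            have h2 : ((F k).card : ℝ) * δk k ^ d ≤ ε⁻¹ * M :=
              (hcard' k).trans (mul_le_mul_of_nonneg_left (hIM k) (by positivity))
            have h3 : (0:ℝ) ≤ δk k ^ 2 := by positivity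
            calc 7 ^ n * (((F k).card : ℝ) * δk k ^ d * δk k ^ 2)
                ≤ 7 ^ n * ((ε⁻¹ * M) * δk k ^ 2) := by
                  apply mul_le_mul_of_nonneg_left _ (by positivity)
                  exact mul_le_mul_of_nonneg_right h2 h3
              _ = 7 ^ n * (ε⁻¹ * M) * δk k ^ 2 := by ring
    have htend : Tendsto (fun k => ENNReal.ofReal (7 ^ n * (ε⁻¹ * M) * δk k ^ 2) * B)
        atTop (𝓝 0) := by
      have h1 : Tendsto (fun k => 7 ^ n * (ε⁻¹ * M) * δk k ^ 2) atTop (𝓝 0) := by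
        have := ((hδk0.pow 2).const_mul (7 ^ n * (ε⁻¹ * M)))
        simpa using this
      have h2 : Tendsto (fun k => ENNReal.ofReal (7 ^ n * (ε⁻¹ * M) * δk k ^ 2))
          atTop (𝓝 0) := by
        simpa using ENNReal.tendsto_ofReal h1
      have h3 := ENNReal.Tendsto.mul_const (b := B) h2 (Or.inr hBne)
      rw [zero_mul] at h3
      exact h3.congr fun k => rfl
    exact le_antisymm (ge_of_tendsto' htend hub) zero_le
  -- the integrals tend to zero
  have hInull : Tendsto I atTop (𝓝 0) := by
    have h1 : Tendsto I atTop (𝓝 (∫ x in ⋂ k, A (δk k), f x)) := by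
      apply tendsto_setIntegral_of_antitone (fun k => hAmeas (δk k))
      · intro i j hij
        exact inter_subset_inter_left _ (cthickening_mono (hδkanti hij) S)
      · exact ⟨0, hfA _⟩
    have h2 : (⋂ k, A (δk k)) ⊆ closure S := by
      intro x hx
      simp only [mem_iInter] at hx
      have hle : ∀ k, EMetric.infEdist x S ≤ ENNReal.ofReal (δk k) := fun k => (hx k).1
      have htt : Tendsto (fun k => ENNReal.ofReal (δk k)) atTop (𝓝 (0:ℝ≥0∞)) := by
        simpa using ENNReal.tendsto_ofReal hδk0
      have : infEDist x S ≤ 0 := ge_of_tendsto' htt hle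
      rw [EMetric.mem_closure_iff_infEdist_zero]
      simpa using this
    have h3 : volume.restrict (⋂ k, A (δk k)) = 0 :=
      Measure.restrict_eq_zero.2 (measure_mono_null h2 hSnull)
    rw [show (∫ x in ⋂ k, A (δk k), f x) = 0 by rw [h3, integral_zero_measure]] at h1
    exact h1
  -- Hausdorff bound
  have hmain : μH[d] S ≤
      liminf (fun k => ∑ i : (F k : Finset (Y n)), EMetric.diam (ball (i : (Y n)) (5 * δk k)) ^ d)
        atTop := by
    apply Measure.hausdorffMeasure_le_liminf_sum d S (fun k => ENNReal.ofReal (10 * δk k))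
    · simpa using ENNReal.tendsto_ofReal (hδk0.const_mul 10)
    · filter_upwards with k
      intro i
      have h1 : EMetric.diam (ball (i : (Y n)) (5 * δk k)) ≤
          2 * ENNReal.ofReal (5 * δk k) := by
        rw [← Metric.emetric_ball]
        exact EMetric.diam_ball
      refine h1.trans ?_
      rw [← ENNReal.ofReal_ofNat 2, ← ENNReal.ofReal_mul (by norm_num)]
      apply ENNReal.ofReal_le_ofReal
      exact le_of_eq (by ring)
    · filter_upwards with k
      intro a ha
      obtain ⟨b, hbF, hab⟩ := mem_iUnion₂.1 (hFcov k ha)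
      exact mem_iUnion.2 ⟨⟨b, hbF⟩, hab⟩
  have hbound : ∀ k, (∑ i : (F k : Finset (Y n)),
      EMetric.diam (ball (i : (Y n)) (5 * δk k)) ^ d)
      ≤ ENNReal.ofReal (10 ^ d * (ε⁻¹ * I k)) := by
    intro k
    have hterm : ∀ i : (F k : Finset (Y n)),
        EMetric.diam (ball (i : (Y n)) (5 * δk k)) ^ d ≤
          ENNReal.ofReal ((10 * δk k) ^ d) := by
      intro i
      have h1 : EMetric.diam (ball (i : (Y n)) (5 * δk k)) ≤
          ENNReal.ofReal (10 * δk k) := by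
        have h2 : EMetric.diam (ball (i : (Y n)) (5 * δk k)) ≤
            2 * ENNReal.ofReal (5 * δk k) := by
          rw [← Metric.emetric_ball]; exact EMetric.diam_ball
        refine h2.trans ?_
        rw [← ENNReal.ofReal_ofNat 2, ← ENNReal.ofReal_mul (by norm_num)]
        apply ENNReal.ofReal_le_ofReal
        exact le_of_eq (by ring)
      calc EMetric.diam (ball (i : (Y n)) (5 * δk k)) ^ d
          ≤ (ENNReal.ofReal (10 * δk k)) ^ d := ENNReal.rpow_le_rpow h1 hd
        _ = ENNReal.ofReal ((10 * δk k) ^ d) :=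
            ENNReal.ofReal_rpow_of_pos (by positivity)
    calc (∑ i : (F k : Finset (Y n)), EMetric.diam (ball (i : (Y n)) (5 * δk k)) ^ d)
        ≤ ∑ _i : (F k : Finset (Y n)), ENNReal.ofReal ((10 * δk k) ^ d) :=
          Finset.sum_le_sum fun i _ => hterm i
      _ = ((F k).card : ℝ≥0∞) * ENNReal.ofReal ((10 * δk k) ^ d) := by
          rw [Finset.sum_const, Finset.card_univ, Fintype.card_coe, nsmul_eq_mul]
      _ = ENNReal.ofReal (((F k).card : ℝ) * (10 * δk k) ^ d) := by
          rw [ENNReal.ofReal_mul (p := (((F k).card : ℕ) : ℝ)) (by positivity), ENNReal.ofReal_natCast]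
      _ ≤ ENNReal.ofReal (10 ^ d * (ε⁻¹ * I k)) := by
          apply ENNReal.ofReal_le_ofReal
          have h1 : (10 * δk k) ^ d = 10 ^ d * δk k ^ d :=
            Real.mul_rpow (by norm_num) (hδkpos k).le
          rw [h1]
          calc ((F k).card : ℝ) * (10 ^ d * δk k ^ d)
              = 10 ^ d * (((F k).card : ℝ) * δk k ^ d) := by ring
            _ ≤ 10 ^ d * (ε⁻¹ * I k) := mul_le_mul_of_nonneg_left (hcard' k)
                (Real.rpow_nonneg (by norm_num) d)
  have htend2 : Tendsto (fun k => ENNReal.ofReal (10 ^ d * (ε⁻¹ * I k))) atTop (𝓝 0) := by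
    have h1 : Tendsto (fun k => 10 ^ d * (ε⁻¹ * I k)) atTop (𝓝 0) := by
      have := (hInull.const_mul (ε⁻¹)).const_mul ((10:ℝ) ^ d)
      simpa using this
    simpa using ENNReal.tendsto_ofReal h1
  have hliminf : liminf (fun k => ∑ i : (F k : Finset (Y n)),
      EMetric.diam (ball (i : (Y n)) (5 * δk k)) ^ d) atTop ≤ 0 := by
    calc liminf (fun k => ∑ i : (F k : Finset (Y n)),
          EMetric.diam (ball (i : (Y n)) (5 * δk k)) ^ d) atTop
        ≤ liminf (fun k => ENNReal.ofReal (10 ^ d * (ε⁻¹ * I k))) atTop :=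
          liminf_le_liminf (Eventually.of_forall hbound)
      _ = 0 := htend2.liminf_eq
  exact le_antisymm (hmain.trans hliminf) zero_le
end

section
/- Let n ≥ 3 and p ≥ 1, and let φ : ℝⁿ → ℝ^p be homogeneous of degree zero, i.e. φ(λx) = φ(x) for every λ > 0 and x ∈ ℝⁿ, differentiable at every x ≠ 0, with |Dφ|² locally integrable on ℝⁿ. Suppose the monotonicity identity holds at every center: for all y ∈ ℝⁿ and all 0 < σ < ρ, ρ^{2−n} ∫_{B_ρ(y)} |Dφ|² − σ^{2−n} ∫_{B_σ(y)} |Dφ|² = 2 ∫_{B_ρ(y)∖B_σ(y)} |x−y|^{2−n} ‖Dφ(x)((x−y)/|x−y|)‖² dx. Then for every y ∈ ℝⁿ the density Θ_φ(y) := lim_{ρ↓0} ρ^{2−n} ∫_{B_ρ(y)} |Dφ|² exists and satisfies Θ_φ(y) ≤ Θ_φ(0) = ∫_{B_1(0)} |Dφ|²; that is, the density of a homogeneous degree zero map attains its maximum at the origin. -/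
open MeasureTheory Metric Filter Set

/-- Theorem 4 of the paper (maximum of the density function for degree zero minimizers):
if `φ : ℝⁿ → ℝᵖ` (`n ≥ 3`, `p ≥ 1`) is homogeneous of degree zero, differentiable away
from `0` with locally integrable energy density `|Dφ|²(x) = ∑ᵢ ‖Dφ(x)(eᵢ)‖²`, and the
monotonicity identity holds at every center `y`, then the density
`Θ_φ(y) = lim_{ρ↓0} ρ^(2-n) ∫_{B_ρ(y)} |Dφ|²` exists for every `y` and satisfies
`Θ_φ(y) ≤ Θ_φ(0) = ∫_{B_1(0)} |Dφ|²`. -/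
theorem density_max_at_origin
    (n p : ℕ) (hn : 3 ≤ n) (hp : 1 ≤ p)
    (φ : EuclideanSpace ℝ (Fin n) → EuclideanSpace ℝ (Fin p))
    (Dφ : EuclideanSpace ℝ (Fin n) →
      (EuclideanSpace ℝ (Fin n) →L[ℝ] EuclideanSpace ℝ (Fin p)))
    (hhom : ∀ l : ℝ, 0 < l → ∀ x, φ (l • x) = φ x)
    (hdiff : ∀ x : EuclideanSpace ℝ (Fin n), x ≠ 0 → HasFDerivAt φ (Dφ x) x)
    (hloc : LocallyIntegrable
      (fun x => ∑ i : Fin n, ‖Dφ x (EuclideanSpace.single i 1)‖ ^ 2) volume)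
    (hmonoid : ∀ y : EuclideanSpace ℝ (Fin n), ∀ σ ρ : ℝ, 0 < σ → σ < ρ →
      ρ ^ ((2 : ℝ) - n) *
          (∫ x in ball y ρ, ∑ i : Fin n, ‖Dφ x (EuclideanSpace.single i 1)‖ ^ 2) -
        σ ^ ((2 : ℝ) - n) *
          (∫ x in ball y σ, ∑ i : Fin n, ‖Dφ x (EuclideanSpace.single i 1)‖ ^ 2) =
      2 * ∫ x in ball y ρ \ ball y σ,
        ‖x - y‖ ^ ((2 : ℝ) - n) * ‖Dφ x (‖x - y‖⁻¹ • (x - y))‖ ^ 2) :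
    (Tendsto
        (fun ρ : ℝ => ρ ^ ((2 : ℝ) - n) *
          ∫ x in ball (0 : EuclideanSpace ℝ (Fin n)) ρ,
            ∑ i : Fin n, ‖Dφ x (EuclideanSpace.single i 1)‖ ^ 2)
        (nhdsWithin 0 (Ioi 0))
        (nhds (∫ x in ball (0 : EuclideanSpace ℝ (Fin n)) 1,
          ∑ i : Fin n, ‖Dφ x (EuclideanSpace.single i 1)‖ ^ 2))) ∧
    ∀ y : EuclideanSpace ℝ (Fin n), ∃ Θy : ℝ,
      Tendsto
        (fun ρ : ℝ => ρ ^ ((2 : ℝ) - n) *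
          ∫ x in ball y ρ, ∑ i : Fin n, ‖Dφ x (EuclideanSpace.single i 1)‖ ^ 2)
        (nhdsWithin 0 (Ioi 0)) (nhds Θy) ∧
      Θy ≤ ∫ x in ball (0 : EuclideanSpace ℝ (Fin n)) 1,
        ∑ i : Fin n, ‖Dφ x (EuclideanSpace.single i 1)‖ ^ 2 := by
  set e : EuclideanSpace ℝ (Fin n) → ℝ :=
    fun x => ∑ i : Fin n, ‖Dφ x (EuclideanSpace.single i 1)‖ ^ 2 with he
  have henn : ∀ x, 0 ≤ e x := fun x => Finset.sum_nonneg fun i _ => sq_nonneg _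
  -- radial derivative vanishes
  have hrad : ∀ x : EuclideanSpace ℝ (Fin n), x ≠ 0 → Dφ x x = 0 := by
    intro x hx
    have hg : HasDerivAt (fun l : ℝ => l • x) x (1 : ℝ) := by
      simpa using (hasDerivAt_id (1 : ℝ)).smul_const x
    have hx1 : HasFDerivAt φ (Dφ x) ((1 : ℝ) • x) := by
      rw [one_smul]; exact hdiff x hx
    have h1 : HasDerivAt (fun l : ℝ => φ (l • x)) (Dφ x x) 1 :=
      hx1.comp_hasDerivAt 1 hg
    have h2 : HasDerivAt (fun l : ℝ => φ (l • x)) 0 1 := by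
      refine (hasDerivAt_const (1 : ℝ) (φ x)).congr_of_eventuallyEq ?_
      filter_upwards [Ioi_mem_nhds (zero_lt_one)] with l hl
      exact hhom l hl x
    exact h1.unique h2
  have hrad' : ∀ x : EuclideanSpace ℝ (Fin n), x ≠ 0 →
      ‖Dφ x (‖x‖⁻¹ • x)‖ ^ 2 = 0 := by
    intro x hx
    simp [hrad x hx]
  -- integrability on balls
  have hint : ∀ (y : EuclideanSpace ℝ (Fin n)) (r : ℝ), IntegrableOn e (ball y r) volume :=
    fun y r => (hloc.integrableOn_isCompact (isCompact_closedBall y r)).mono_set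
      ball_subset_closedBall
  -- monotonicity of the density ratio
  have hmono : ∀ y : EuclideanSpace ℝ (Fin n),
      MonotoneOn (fun ρ : ℝ => ρ ^ ((2 : ℝ) - n) * ∫ x in ball y ρ, e x) (Ioi 0) := by
    intro y σ hσ ρ hρ hle
    rcases eq_or_lt_of_le hle with rfl | h
    · exact le_rfl
    · have hid := hmonoid y σ ρ hσ h
      have hr : 0 ≤ 2 * ∫ x in ball y ρ \ ball y σ,
          ‖x - y‖ ^ ((2 : ℝ) - n) * ‖Dφ x (‖x - y‖⁻¹ • (x - y))‖ ^ 2 := by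
        refine mul_nonneg (by norm_num) (setIntegral_nonneg
          (measurableSet_ball.diff measurableSet_ball) fun x _ => ?_)
        exact mul_nonneg (Real.rpow_nonneg (norm_nonneg _) _) (sq_nonneg _)
      have hid' : ρ ^ ((2 : ℝ) - n) * (∫ x in ball y ρ, e x) -
          σ ^ ((2 : ℝ) - n) * (∫ x in ball y σ, e x) =
          2 * ∫ x in ball y ρ \ ball y σ,
            ‖x - y‖ ^ ((2 : ℝ) - n) * ‖Dφ x (‖x - y‖⁻¹ • (x - y))‖ ^ 2 := hid
      dsimp only
      linarith
  -- constancy at the origin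
  have hzero : ∀ σ ρ : ℝ, 0 < σ → σ < ρ →
      ρ ^ ((2 : ℝ) - n) * ∫ x in ball (0 : EuclideanSpace ℝ (Fin n)) ρ, e x =
      σ ^ ((2 : ℝ) - n) * ∫ x in ball (0 : EuclideanSpace ℝ (Fin n)) σ, e x := by
    intro σ ρ hσ hσρ
    have h := hmonoid 0 σ ρ hσ hσρ
    have hz : ∫ x in ball (0 : EuclideanSpace ℝ (Fin n)) ρ \ ball 0 σ,
        ‖x - 0‖ ^ ((2 : ℝ) - n) * ‖Dφ x (‖x - 0‖⁻¹ • (x - 0))‖ ^ 2 = 0 := by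
      rw [setIntegral_congr_fun (measurableSet_ball.diff measurableSet_ball)
        (g := fun _ => (0 : ℝ)) ?_, integral_zero]
      intro x hx
      have hx0 : x ≠ 0 := by
        rintro rfl
        exact hx.2 (mem_ball_self hσ)
      simp only [sub_zero]
      rw [hrad' x hx0, mul_zero]
    rw [hz, mul_zero] at h
    linarith
  set Θ0 : ℝ := ∫ x in ball (0 : EuclideanSpace ℝ (Fin n)) 1, e x with hΘ0
  have hconst : ∀ ρ : ℝ, 0 < ρ →
      ρ ^ ((2 : ℝ) - n) * ∫ x in ball (0 : EuclideanSpace ℝ (Fin n)) ρ, e x = Θ0 := by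
    intro ρ hρ
    have h1 : (1 : ℝ) ^ ((2 : ℝ) - n) *
        ∫ x in ball (0 : EuclideanSpace ℝ (Fin n)) 1, e x = Θ0 := by
      rw [Real.one_rpow, one_mul]
    rcases lt_trichotomy ρ 1 with h | h | h
    · rw [← h1]; exact (hzero ρ 1 hρ h).symm
    · rw [h]; exact h1
    · rw [← h1, hzero 1 ρ one_pos h]
  have hΘ0nn : 0 ≤ Θ0 := setIntegral_nonneg measurableSet_ball fun x _ => henn x
  constructor
  · refine Tendsto.congr' ?_ (tendsto_const_nhds (α := ℝ) (f := nhdsWithin 0 (Ioi 0)))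
    filter_upwards [self_mem_nhdsWithin] with ρ hρ
    exact (hconst ρ hρ).symm
  · intro y
    set f : ℝ → ℝ := fun ρ => ρ ^ ((2 : ℝ) - n) * ∫ x in ball y ρ, e x with hf
    have hfnn : ∀ ρ ∈ Ioi (0 : ℝ), 0 ≤ f ρ := fun ρ hρ =>
      mul_nonneg (Real.rpow_nonneg (le_of_lt hρ) _)
        (setIntegral_nonneg measurableSet_ball fun x _ => henn x)
    have hbdd : BddBelow (f '' Ioi 0) := by
      refine ⟨0, ?_⟩
      rintro _ ⟨ρ, hρ, rfl⟩
      exact hfnn ρ hρ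
    refine ⟨sInf (f '' Ioi 0), (hmono y).tendsto_nhdsGT hbdd, ?_⟩
    -- the bound
    have key : ∀ ρ : ℝ, 0 < ρ →
        sInf (f '' Ioi 0) ≤ ((ρ + ‖y‖) / ρ) ^ ((n : ℝ) - 2) * Θ0 := by
      intro ρ hρ
      have h1 : sInf (f '' Ioi 0) ≤ f ρ := csInf_le hbdd (mem_image_of_mem f hρ)
      have hsub : ball y ρ ⊆ ball (0 : EuclideanSpace ℝ (Fin n)) (ρ + ‖y‖) := by
        intro x hx
        rw [mem_ball] at hx ⊢
        calc dist x 0 ≤ dist x y + dist y 0 := dist_triangle _ _ _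
          _ < ρ + ‖y‖ := by rw [dist_zero_right]; exact add_lt_add_left hx _
      have h2 : (∫ x in ball y ρ, e x) ≤
          ∫ x in ball (0 : EuclideanSpace ℝ (Fin n)) (ρ + ‖y‖), e x := by
        refine setIntegral_mono_set (hint 0 (ρ + ‖y‖)) ?_ (HasSubset.Subset.eventuallyLE hsub)
        exact Filter.Eventually.of_forall fun x => henn x
      have hρy : (0 : ℝ) < ρ + ‖y‖ := by positivity
      have hE : (∫ x in ball (0 : EuclideanSpace ℝ (Fin n)) (ρ + ‖y‖), e x) =
          (ρ + ‖y‖) ^ ((n : ℝ) - 2) * Θ0 := by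
        have h3 := hconst (ρ + ‖y‖) hρy
        have h4 : ((2 : ℝ) - n) = -((n : ℝ) - 2) := by ring
        rw [h4, Real.rpow_neg hρy.le] at h3
        have h5 : (0 : ℝ) < (ρ + ‖y‖) ^ ((n : ℝ) - 2) := Real.rpow_pos_of_pos hρy _
        field_simp at h3
        linarith
      have h6 : f ρ ≤ ρ ^ ((2 : ℝ) - n) * ((ρ + ‖y‖) ^ ((n : ℝ) - 2) * Θ0) := by
        rw [hf]
        dsimp only
        rw [← hE]
        exact mul_le_mul_of_nonneg_left h2 (Real.rpow_nonneg hρ.le _)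
      have h7 : ρ ^ ((2 : ℝ) - n) * ((ρ + ‖y‖) ^ ((n : ℝ) - 2) * Θ0) =
          ((ρ + ‖y‖) / ρ) ^ ((n : ℝ) - 2) * Θ0 := by
        rw [Real.div_rpow hρy.le hρ.le]
        have h4 : ((2 : ℝ) - n) = -((n : ℝ) - 2) := by ring
        rw [h4, Real.rpow_neg hρ.le]
        field_simp
      calc sInf (f '' Ioi 0) ≤ f ρ := h1
        _ ≤ _ := h6
        _ = _ := h7
    -- take ρ → ∞
    have hlim : Tendsto (fun ρ : ℝ => ((ρ + ‖y‖) / ρ) ^ ((n : ℝ) - 2) * Θ0)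
        atTop (nhds Θ0) := by
      have hb : Tendsto (fun ρ : ℝ => (ρ + ‖y‖) / ρ) atTop (nhds 1) := by
        have : Tendsto (fun ρ : ℝ => 1 + ‖y‖ / ρ) atTop (nhds 1) := by
          have h0 : Tendsto (fun ρ : ℝ => ‖y‖ / ρ) atTop (nhds 0) :=
            tendsto_const_nhds.div_atTop tendsto_id
          simpa using tendsto_const_nhds.add h0
        refine this.congr' ?_
        filter_upwards [eventually_gt_atTop (0 : ℝ)] with ρ hρ
        field_simp
      have hc : ContinuousAt (fun x : ℝ => x ^ ((n : ℝ) - 2)) 1 :=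
        Real.continuousAt_rpow_const 1 _ (Or.inl one_ne_zero)
      have := (hc.tendsto.comp hb).mul_const Θ0
      simpa [Real.one_rpow] using this
    exact ge_of_tendsto hlim
      (by filter_upwards [eventually_gt_atTop (0 : ℝ)] with ρ hρ using key ρ hρ)
end

section
/- Let n, p ≥ 1 and let φ : ℝⁿ → ℝ^p satisfy φ(λx) = φ(x) for every λ > 0 and every x ∈ ℝⁿ. Suppose y ∈ ℝⁿ is such that φ(y + λx) = φ(y + x) for every λ > 0 and every x ∈ ℝⁿ. Then φ(x + t y) = φ(x) for every t ∈ ℝ and every x ∈ ℝⁿ. -/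
open Set

/-- The translation-invariance computation in Section 2.5 of the paper: if
`φ : ℝⁿ → ℝᵖ` is homogeneous of degree zero (`φ(λx) = φ(x)` for all `λ > 0`), and
`y` is such that `φ(y + λx) = φ(y + x)` for all `λ > 0` and all `x`, then
`φ(x + t y) = φ(x)` for every `t ∈ ℝ` and every `x`. -/
theorem translation_invariance_from_homogeneity
    (n p : ℕ) (hn : 1 ≤ n) (hp : 1 ≤ p)
    (φ : EuclideanSpace ℝ (Fin n) → EuclideanSpace ℝ (Fin p))
    (hhom : ∀ l : ℝ, 0 < l → ∀ x, φ (l • x) = φ x)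
    (y : EuclideanSpace ℝ (Fin n))
    (hy : ∀ l : ℝ, 0 < l → ∀ x, φ (y + l • x) = φ (y + x)) :
    ∀ (t : ℝ) (x : EuclideanSpace ℝ (Fin n)), φ (x + t • y) = φ x := by
  have key : ∀ c : ℝ, 0 < c → ∀ x, φ (x + c • y) = φ (x + y) := by
    intro c hc x
    calc φ (x + c • y) = φ (c • (c⁻¹ • x + y)) := by
          rw [smul_add, smul_smul, mul_inv_cancel₀ hc.ne', one_smul, add_comm]
      _ = φ (c⁻¹ • x + y) := hhom c hc _
      _ = φ (y + c⁻¹ • x) := by rw [add_comm]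
      _ = φ (y + x) := hy c⁻¹ (inv_pos.mpr hc) x
      _ = φ (x + y) := by rw [add_comm]
  have key2 : ∀ t : ℝ, -1 < t → ∀ x, φ (x + t • y) = φ x := by
    intro t ht x
    have h := key (t + 1) (by linarith) (x - y)
    have e1 : x - y + (t + 1) • y = x + t • y := by
      rw [add_smul, one_smul]; abel
    have e2 : x - y + y = x := by abel
    rwa [e1, e2] at h
  intro t x
  rcases lt_or_ge (-1 : ℝ) t with ht | ht
  · exact key2 t ht x
  · have h := key2 (-t) (by linarith) (x + t • y)
    have e : x + t • y + (-t) • y = x := by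
      rw [neg_smul]; abel
    rw [e] at h
    exact h.symm
end

section
/- Let n ≥ 1 and 0 ≤ j ≤ n − 1. There exists a function β : (0,∞) → (0,∞) with β(t) → 0 as t → 0 such that the following holds for every δ > 0: if A ⊆ ℝⁿ is any set with the property that for every y ∈ A there exists ε > 0 such that for each ρ ∈ (0, ε] there is a j-dimensional linear subspace L = L_{y,ρ} ⊆ ℝⁿ with A ∩ B_ρ(y) ⊆ {x ∈ ℝⁿ : dist(x − y, L) < δρ}, then H^{j+β(δ)}(A) = 0. -/
open MeasureTheory Metric Filter Set
open scoped ENNReal NNReal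

private lemma sep_card_bound {j : ℕ} {ε R : ℝ} (hε : 0 < ε) (hR : 0 < R)
    (S : Finset (EuclideanSpace ℝ (Fin j)))
    (hS : ↑S ⊆ closedBall (0 : EuclideanSpace ℝ (Fin j)) R)
    (hsep : (S : Set (EuclideanSpace ℝ (Fin j))).Pairwise fun a b => ε ≤ dist a b) :
    (S.card : ℝ) * (ε / 2) ^ j ≤ (R + ε / 2) ^ j := by
  have hdisj : (↑S : Set (EuclideanSpace ℝ (Fin j))).PairwiseDisjoint
      (fun s => ball s (ε / 2)) := by
    intro a ha b hb hab
    exact ball_disjoint_ball (by linarith [hsep ha hb hab])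
  have h1 : ∑ s ∈ S, volume (ball s (ε / 2)) ≤
      volume (closedBall (0 : EuclideanSpace ℝ (Fin j)) (R + ε / 2)) := by
    rw [← measure_biUnion_finset hdisj (fun _ _ => measurableSet_ball)]
    apply measure_mono
    rintro x hx
    simp only [mem_iUnion, exists_prop] at hx
    obtain ⟨z, hz, hxz⟩ := hx
    have hz' := hS hz
    rw [mem_closedBall] at hz' ⊢
    have := mem_ball.1 hxz
    calc dist x 0 ≤ dist x z + dist z 0 := dist_triangle _ _ _
      _ ≤ R + ε / 2 := by linarith
  have hball : ∀ x : EuclideanSpace ℝ (Fin j),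
      volume (ball x (ε / 2)) = ENNReal.ofReal ((ε / 2) ^ j) *
        volume (ball (0 : EuclideanSpace ℝ (Fin j)) 1) := by
    intro x
    rw [Measure.addHaar_ball_of_pos volume x (by linarith : (0:ℝ) < ε / 2)]
    congr 2
    rw [finrank_euclideanSpace_fin]
  have hcball : volume (closedBall (0 : EuclideanSpace ℝ (Fin j)) (R + ε / 2)) =
      ENNReal.ofReal ((R + ε / 2) ^ j) *
        volume (ball (0 : EuclideanSpace ℝ (Fin j)) 1) := by
    rw [Measure.addHaar_closedBall volume _ (by linarith : (0:ℝ) ≤ R + ε / 2)]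
    congr 2
    rw [finrank_euclideanSpace_fin]
  rw [hcball] at h1
  simp only [hball, Finset.sum_const, nsmul_eq_mul, ← mul_assoc] at h1
  have hBne : volume (ball (0 : EuclideanSpace ℝ (Fin j)) 1) ≠ 0 :=
    (measure_ball_pos volume _ one_pos).ne'
  have hBtop : volume (ball (0 : EuclideanSpace ℝ (Fin j)) 1) ≠ ⊤ :=
    measure_ball_lt_top.ne
  rw [ENNReal.mul_le_mul_iff_left hBne hBtop] at h1
  have h2 : ENNReal.ofReal ((S.card : ℝ) * (ε / 2) ^ j) ≤
      ENNReal.ofReal ((R + ε / 2) ^ j) := by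
    rw [ENNReal.ofReal_mul (by positivity), ENNReal.ofReal_natCast]
    exact h1
  exact (ENNReal.ofReal_le_ofReal_iff (by positivity)).1 h2

private lemma exists_net (j : ℕ) {ε R : ℝ} (hε : 0 < ε) (hR : 0 < R) :
    ∃ S : Finset (EuclideanSpace ℝ (Fin j)),
      (S.card : ℝ) * (ε / 2) ^ j ≤ (R + ε / 2) ^ j ∧
      closedBall (0 : EuclideanSpace ℝ (Fin j)) R ⊆ ⋃ s ∈ S, ball s ε := by
  classical
  set E := EuclideanSpace ℝ (Fin j)
  set Pfam : Set (Finset E) :=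
    {S | ↑S ⊆ closedBall (0 : E) R ∧ (S : Set E).Pairwise fun a b => ε ≤ dist a b} with hPfam
  set cards : Set ℕ := Finset.card '' Pfam with hcards
  have hne : cards.Nonempty := ⟨0, ⟨∅, ⟨by simp, by simp⟩, rfl⟩⟩
  have hbdd : BddAbove cards := by
    refine ⟨⌈(R + ε / 2) ^ j / (ε / 2) ^ j⌉₊, ?_⟩
    rintro c ⟨S, hSP, rfl⟩
    have hb := sep_card_bound hε hR S hSP.1 hSP.2
    have : (S.card : ℝ) ≤ (R + ε / 2) ^ j / (ε / 2) ^ j := by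
      rw [le_div_iff₀ (by positivity)]; exact hb
    exact_mod_cast this.trans (Nat.le_ceil _)
  obtain ⟨S, hSP, hScard⟩ := Nat.sSup_mem hne hbdd
  refine ⟨S, sep_card_bound hε hR S hSP.1 hSP.2, ?_⟩
  intro x hx
  by_contra hxS
  simp only [mem_iUnion, exists_prop, not_exists, not_and] at hxS
  have hxsep : ∀ s ∈ S, ε ≤ dist x s := by
    intro s hs
    by_contra hlt
    exact hxS s hs (mem_ball.2 (lt_of_not_ge hlt))
  have hxnot : x ∉ S := fun hxmem => by
    have := hxsep x hxmem
    simp at this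
    linarith
  have hins : insert x S ∈ Pfam := by
    constructor
    · intro z hz
      rcases Finset.mem_insert.1 (by exact_mod_cast hz) with rfl | hzS
      · exact hx
      · exact hSP.1 hzS
    · rw [Finset.coe_insert]
      rw [Set.pairwise_insert]
      exact ⟨hSP.2, fun b hb _ => ⟨hxsep b hb, by rw [dist_comm]; exact hxsep b hb⟩⟩
  have hle : (insert x S).card ≤ sSup cards :=
    le_csSup hbdd ⟨insert x S, hins, rfl⟩
  rw [Finset.card_insert_of_notMem hxnot, hScard] at hle
  omega

private lemma slab_cover {n j : ℕ} (L : Submodule ℝ (EuclideanSpace ℝ (Fin n)))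
    (hL : Module.finrank ℝ L = j) {δ ρ : ℝ} (hδ : 0 < δ) (hδ1 : δ ≤ 1) (hρ : 0 < ρ)
    (y : EuclideanSpace ℝ (Fin n)) :
    ∃ T : Finset (EuclideanSpace ℝ (Fin n)), (T.card : ℝ) ≤ (12 / δ) ^ j ∧
      {x | x ∈ ball y ρ ∧ infDist (x - y) (L : Set (EuclideanSpace ℝ (Fin n))) < δ * ρ} ⊆
        ⋃ c ∈ T, ball c (2 * (δ * ρ)) := by
  classical
  subst hL
  set j := Module.finrank ℝ L with hj
  let e : L ≃ₗᵢ[ℝ] EuclideanSpace ℝ (Fin j) := (stdOrthonormalBasis ℝ L).repr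
  obtain ⟨S, hScard, hScov⟩ := exists_net j (ε := δ * ρ) (R := 2 * ρ) (by positivity)
    (by positivity)
  have hcard : (S.card : ℝ) ≤ (12 / δ) ^ j := by
    have h1 : (S.card : ℝ) ≤ (2 * ρ + δ * ρ / 2) ^ j / (δ * ρ / 2) ^ j := by
      rw [le_div_iff₀ (by positivity)]; exact hScard
    refine h1.trans ?_
    rw [← div_pow]
    apply pow_le_pow_left₀ (by positivity)
    rw [div_le_div_iff₀ (by positivity) hδ]
    have hδδ : δ * δ * ρ ≤ δ * ρ := by
      nlinarith [mul_nonneg (mul_nonneg (sub_nonneg.2 hδ1) hδ.le) hρ.le]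
    nlinarith
  refine ⟨S.image (fun s => y + ((e.symm s : L) : EuclideanSpace ℝ (Fin n))), ?_, ?_⟩
  · exact le_trans (by exact_mod_cast Finset.card_image_le) hcard
  · rintro x ⟨hx1, hx2⟩
    have hLne : (L : Set (EuclideanSpace ℝ (Fin n))).Nonempty := ⟨0, L.zero_mem⟩
    obtain ⟨l, hlL, hl⟩ := (infDist_lt_iff hLne).1 hx2
    have hlnorm : ‖l‖ ≤ 2 * ρ := by
      have h3 : ‖x - y‖ < ρ := by
        rw [← dist_eq_norm]; exact mem_ball.1 hx1
      have h4 : ‖l - (x - y)‖ < δ * ρ := by rw [← dist_eq_norm, dist_comm]; exact hl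
      calc ‖l‖ = ‖l - (x - y) + (x - y)‖ := by rw [sub_add_cancel]
        _ ≤ ‖l - (x - y)‖ + ‖x - y‖ := norm_add_le _ _
        _ ≤ 2 * ρ := by nlinarith
    have hmem : e ⟨l, hlL⟩ ∈ closedBall (0 : EuclideanSpace ℝ (Fin j)) (2 * ρ) := by
      rw [mem_closedBall_zero_iff, e.norm_map]
      exact hlnorm
    obtain ⟨s, hs, hes⟩ := by
      have := hScov hmem
      simpa only [mem_iUnion, exists_prop] using this
    have hdist : dist l ((e.symm s : L) : EuclideanSpace ℝ (Fin n)) < δ * ρ := by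
      have h5 : dist (e.symm (e ⟨l, hlL⟩)) (e.symm s) < δ * ρ := by
        rw [e.symm.dist_map]
        exact mem_ball.1 hes
      rw [e.symm_apply_apply] at h5
      exact_mod_cast h5
    refine mem_iUnion.2 ⟨y + ((e.symm s : L) : EuclideanSpace ℝ (Fin n)), mem_iUnion.2
      ⟨Finset.mem_image.2 ⟨s, hs, rfl⟩, ?_⟩⟩
    rw [mem_ball, dist_eq_norm]
    have : x - (y + ((e.symm s : L) : EuclideanSpace ℝ (Fin n))) =
        (x - y - l) + (l - ((e.symm s : L) : EuclideanSpace ℝ (Fin n))) := by abel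
    rw [this]
    calc ‖(x - y - l) + (l - ((e.symm s : L) : EuclideanSpace ℝ (Fin n)))‖
        ≤ ‖x - y - l‖ + ‖l - ((e.symm s : L) : EuclideanSpace ℝ (Fin n))‖ := norm_add_le _ _
      _ < 2 * (δ * ρ) := by
          have h6 := hl
          have h7 := hdist
          rw [dist_eq_norm] at h6 h7
          linarith


private lemma ediam_ball_le {X : Type*} [PseudoMetricSpace X] (x : X) (r : ℝ) :
    EMetric.diam (ball x r) ≤ ENNReal.ofReal (2 * r) := by
  rw [← Metric.emetric_ball, ENNReal.ofReal_mul (by norm_num : (0:ℝ) ≤ 2)]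
  refine le_trans EMetric.diam_ball ?_
  simp

set_option maxHeartbeats 1000000 in
private lemma iter_zero {n j : ℕ} {δ s r₀ : ℝ} (hδ : 0 < δ) (hδ8 : δ ≤ 1 / 8)
    (hs0 : 0 ≤ s) (hθ : (12 / δ) ^ j * (4 * δ) ^ s ≤ 1 / 2)
    (B : Set (EuclideanSpace ℝ (Fin n))) (hr₀ : 0 < r₀)
    (y₀ : EuclideanSpace ℝ (Fin n)) (hy₀ : y₀ ∈ B)
    (hB : ∀ z ∈ B, ∀ ρ : ℝ, 0 < ρ → ρ ≤ r₀ →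
      ∃ L : Submodule ℝ (EuclideanSpace ℝ (Fin n)), Module.finrank ℝ L = j ∧
        B ∩ ball z ρ ⊆ {x | infDist (x - z) (L : Set (EuclideanSpace ℝ (Fin n))) < δ * ρ}) :
    μH[s] (B ∩ ball y₀ r₀) = 0 := by
  classical
  set C : ℝ := (12 / δ) ^ j with hC
  have hC0 : 0 < C := by positivity
  have h4δ : 0 < 4 * δ := by linarith
  have h4δ1 : 4 * δ ≤ 1 / 2 := by linarith
  have claim : ∀ k : ℕ, ∃ S : Finset (EuclideanSpace ℝ (Fin n)),
      (∀ z ∈ S, z ∈ B) ∧ (S.card : ℝ) ≤ C ^ k ∧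
      B ∩ ball y₀ r₀ ⊆ ⋃ z ∈ S, ball z ((4 * δ) ^ k * r₀) := by
    intro k
    induction k with
    | zero =>
      refine ⟨{y₀}, by simpa using hy₀, by simp, ?_⟩
      intro x hx
      simp only [pow_zero, one_mul, Finset.mem_singleton, mem_iUnion, exists_prop]
      exact ⟨y₀, by simp, hx.2⟩
    | succ k ih =>
      obtain ⟨S, hSB, hScard, hScov⟩ := ih
      set ρ : ℝ := (4 * δ) ^ k * r₀ with hρdef
      have hρ0 : 0 < ρ := by positivity
      have hρr₀ : ρ ≤ r₀ := by
        have : (4 * δ) ^ k ≤ 1 := pow_le_one₀ h4δ.le (by linarith)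
        nlinarith
      have hex : ∀ z ∈ S, ∃ T : Finset (EuclideanSpace ℝ (Fin n)),
          (T.card : ℝ) ≤ C ∧ B ∩ ball z ρ ⊆ ⋃ c ∈ T, ball c (2 * (δ * ρ)) := by
        intro z hz
        obtain ⟨L, hLrk, hLsub⟩ := hB z (hSB z hz) ρ hρ0 hρr₀
        obtain ⟨T, hT1, hT2⟩ := slab_cover L hLrk hδ (by linarith) hρ0 z
        exact ⟨T, hT1, fun x hx => hT2 ⟨hx.2, hLsub hx⟩⟩
      set T : EuclideanSpace ℝ (Fin n) → Finset (EuclideanSpace ℝ (Fin n)) :=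
        fun z => if h : ∃ T : Finset (EuclideanSpace ℝ (Fin n)),
          (T.card : ℝ) ≤ C ∧ B ∩ ball z ρ ⊆ ⋃ c ∈ T, ball c (2 * (δ * ρ))
          then h.choose else ∅ with hTdef
      have hTspec : ∀ z ∈ S, ((T z).card : ℝ) ≤ C ∧
          B ∩ ball z ρ ⊆ ⋃ c ∈ T z, ball c (2 * (δ * ρ)) := by
        intro z hz
        have h := hex z hz
        simp only [hTdef, dif_pos h]
        exact h.choose_spec
      set pick : EuclideanSpace ℝ (Fin n) → EuclideanSpace ℝ (Fin n) →
          EuclideanSpace ℝ (Fin n) := fun z c =>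
        if h : (B ∩ ball z ρ ∩ ball c (2 * (δ * ρ))).Nonempty then h.choose else y₀
        with hpickdef
      refine ⟨S.biUnion (fun z => (T z).image (pick z)), ?_, ?_, ?_⟩
      · intro w hw
        obtain ⟨z, hz, hw⟩ := Finset.mem_biUnion.1 hw
        obtain ⟨c, hc, rfl⟩ := Finset.mem_image.1 hw
        by_cases h : (B ∩ ball z ρ ∩ ball c (2 * (δ * ρ))).Nonempty
        · simp only [hpickdef, dif_pos h]
          exact h.choose_spec.1.1
        · simp only [hpickdef, dif_neg h]
          exact hy₀
      · calc ((S.biUnion (fun z => (T z).image (pick z))).card : ℝ)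
            ≤ (∑ z ∈ S, ((T z).image (pick z)).card : ℕ) := by
              exact_mod_cast Finset.card_biUnion_le
          _ = ∑ z ∈ S, (((T z).image (pick z)).card : ℝ) := by push_cast; rfl
          _ ≤ ∑ z ∈ S, C := by
              refine Finset.sum_le_sum fun z hz => ?_
              calc (((T z).image (pick z)).card : ℝ) ≤ ((T z).card : ℝ) := by
                    exact_mod_cast Finset.card_image_le
                _ ≤ C := (hTspec z hz).1
          _ = S.card * C := by rw [Finset.sum_const, nsmul_eq_mul]
          _ ≤ C ^ k * C := by nlinarith
          _ = C ^ (k + 1) := by ring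
      · intro x hx
        obtain ⟨z, hz, hxz⟩ := by
          have := hScov hx
          simpa only [mem_iUnion, exists_prop] using this
        have hxball : x ∈ B ∩ ball z ρ := ⟨hx.1, hxz⟩
        obtain ⟨c, hc, hxc⟩ := by
          have := (hTspec z hz).2 hxball
          simpa only [mem_iUnion, exists_prop] using this
        have hne : (B ∩ ball z ρ ∩ ball c (2 * (δ * ρ))).Nonempty := ⟨x, hxball, hxc⟩
        have hpmem : pick z c ∈ B ∩ ball z ρ ∩ ball c (2 * (δ * ρ)) := by
          simp only [hpickdef, dif_pos hne]
          exact hne.choose_spec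
        refine mem_iUnion.2 ⟨pick z c, mem_iUnion.2 ⟨Finset.mem_biUnion.2
          ⟨z, hz, Finset.mem_image.2 ⟨c, hc, rfl⟩⟩, ?_⟩⟩
        rw [mem_ball]
        have h1 : dist x c < 2 * (δ * ρ) := mem_ball.1 hxc
        have h2 : dist (pick z c) c < 2 * (δ * ρ) := mem_ball.1 hpmem.2
        calc dist x (pick z c) ≤ dist x c + dist c (pick z c) := dist_triangle _ _ _
          _ < 2 * (δ * ρ) + 2 * (δ * ρ) := by rw [dist_comm c]; linarith
          _ = (4 * δ) ^ (k + 1) * r₀ := by rw [hρdef]; ring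
  choose Sf hSfB hSfcard hSfcov using claim
  have key : μH[s] (B ∩ ball y₀ r₀) ≤
      liminf (fun k => ∑ i : (Sf k : Finset (EuclideanSpace ℝ (Fin n))),
        EMetric.diam (ball (i : EuclideanSpace ℝ (Fin n)) ((4 * δ) ^ k * r₀)) ^ s) atTop := by
    refine Measure.hausdorffMeasure_le_liminf_sum s _
      (fun k => ENNReal.ofReal (2 * ((4 * δ) ^ k * r₀))) ?_ _ ?_ ?_
    · have hreal : Tendsto (fun k : ℕ => 2 * ((4 * δ) ^ k * r₀)) atTop (nhds 0) := by
        have h1 : Tendsto (fun k : ℕ => (4 * δ) ^ k) atTop (nhds 0) :=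
          tendsto_pow_atTop_nhds_zero_of_lt_one (by linarith) (by linarith)
        have := (h1.mul_const r₀).const_mul 2
        simpa using this
      have := (ENNReal.continuous_ofReal.tendsto 0).comp hreal
      simpa only [ENNReal.ofReal_zero, Function.comp_def] using this
    · exact Eventually.of_forall fun k => fun i => ediam_ball_le _ _
    · refine Eventually.of_forall fun k => ?_
      intro x hx
      obtain ⟨z, hz, hxz⟩ := by
        have := hSfcov k hx
        simpa only [mem_iUnion, exists_prop] using this
      exact mem_iUnion.2 ⟨⟨z, hz⟩, hxz⟩
  have hbound : ∀ k : ℕ, (∑ i : (Sf k : Finset (EuclideanSpace ℝ (Fin n))),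
      EMetric.diam (ball (i : EuclideanSpace ℝ (Fin n)) ((4 * δ) ^ k * r₀)) ^ s) ≤
      ENNReal.ofReal ((2 * r₀) ^ s) * (ENNReal.ofReal (C * (4 * δ) ^ s)) ^ k := by
    intro k
    have hterm : ∀ i : (Sf k : Finset (EuclideanSpace ℝ (Fin n))),
        EMetric.diam (ball (i : EuclideanSpace ℝ (Fin n)) ((4 * δ) ^ k * r₀)) ^ s ≤
        ENNReal.ofReal ((2 * ((4 * δ) ^ k * r₀)) ^ s) := by
      intro i
      have h1 : EMetric.diam (ball (i : EuclideanSpace ℝ (Fin n)) ((4 * δ) ^ k * r₀)) ≤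
          ENNReal.ofReal (2 * ((4 * δ) ^ k * r₀)) := ediam_ball_le _ _
      calc EMetric.diam (ball (i : EuclideanSpace ℝ (Fin n)) ((4 * δ) ^ k * r₀)) ^ s
          ≤ (ENNReal.ofReal (2 * ((4 * δ) ^ k * r₀))) ^ s := ENNReal.rpow_le_rpow h1 hs0
        _ = ENNReal.ofReal ((2 * ((4 * δ) ^ k * r₀)) ^ s) :=
            ENNReal.ofReal_rpow_of_pos (by positivity)
    calc (∑ i : (Sf k : Finset (EuclideanSpace ℝ (Fin n))),
        EMetric.diam (ball (i : EuclideanSpace ℝ (Fin n)) ((4 * δ) ^ k * r₀)) ^ s)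
        ≤ ∑ _i : (Sf k : Finset (EuclideanSpace ℝ (Fin n))),
          ENNReal.ofReal ((2 * ((4 * δ) ^ k * r₀)) ^ s) := Finset.sum_le_sum fun i _ => hterm i
      _ = ((Sf k).card : ℝ≥0∞) * ENNReal.ofReal ((2 * ((4 * δ) ^ k * r₀)) ^ s) := by
          rw [Finset.sum_const, Finset.card_univ, Fintype.card_coe, nsmul_eq_mul]
      _ ≤ ENNReal.ofReal (C ^ k) * ENNReal.ofReal ((2 * ((4 * δ) ^ k * r₀)) ^ s) := by
          refine mul_le_mul_left ?_ _
          rw [← ENNReal.ofReal_natCast]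
          exact ENNReal.ofReal_le_ofReal (hSfcard k)
      _ = ENNReal.ofReal (C ^ k * (2 * ((4 * δ) ^ k * r₀)) ^ s) := by
          rw [ENNReal.ofReal_mul (by positivity)]
      _ = ENNReal.ofReal ((2 * r₀) ^ s) * (ENNReal.ofReal (C * (4 * δ) ^ s)) ^ k := by
          rw [← ENNReal.ofReal_pow (by positivity), ← ENNReal.ofReal_mul (by positivity)]
          congr 1
          have h2 : 2 * ((4 * δ) ^ k * r₀) = (2 * r₀) * (4 * δ) ^ k := by ring
          rw [h2, Real.mul_rpow (by positivity) (by positivity)]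
          have h3 : ((4 * δ) ^ k : ℝ) ^ s = ((4 * δ) ^ s) ^ k := by
            rw [← Real.rpow_natCast (4 * δ) k, ← Real.rpow_natCast ((4 * δ) ^ s) k,
              ← Real.rpow_mul h4δ.le, ← Real.rpow_mul h4δ.le, mul_comm (k : ℝ) s]
          rw [h3, mul_pow]
          ring
  have htend : Tendsto (fun k : ℕ => ENNReal.ofReal ((2 * r₀) ^ s) *
      (ENNReal.ofReal (C * (4 * δ) ^ s)) ^ k) atTop (nhds 0) := by
    have h1 : ENNReal.ofReal (C * (4 * δ) ^ s) < 1 := by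
      calc ENNReal.ofReal (C * (4 * δ) ^ s) ≤ ENNReal.ofReal (1 / 2) :=
        ENNReal.ofReal_le_ofReal hθ
        _ < 1 := by
          rw [← ENNReal.ofReal_one]
          exact ENNReal.ofReal_lt_ofReal_iff_of_nonneg (by norm_num) |>.2 (by norm_num)
    have h2 : Tendsto (fun k : ℕ => (ENNReal.ofReal (C * (4 * δ) ^ s)) ^ k) atTop (nhds 0) :=
      ENNReal.tendsto_pow_atTop_nhds_zero_of_lt_one h1
    have := ENNReal.Tendsto.const_mul (a := ENNReal.ofReal ((2 * r₀) ^ s)) h2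
      (Or.inr ENNReal.ofReal_ne_top)
    simpa using this
  have hlim : liminf (fun k => ∑ i : (Sf k : Finset (EuclideanSpace ℝ (Fin n))),
      EMetric.diam (ball (i : EuclideanSpace ℝ (Fin n)) ((4 * δ) ^ k * r₀)) ^ s) atTop ≤ 0 := by
    calc liminf (fun k => ∑ i : (Sf k : Finset (EuclideanSpace ℝ (Fin n))),
        EMetric.diam (ball (i : EuclideanSpace ℝ (Fin n)) ((4 * δ) ^ k * r₀)) ^ s) atTop
        ≤ liminf (fun k : ℕ => ENNReal.ofReal ((2 * r₀) ^ s) *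
          (ENNReal.ofReal (C * (4 * δ) ^ s)) ^ k) atTop :=
          liminf_le_liminf (Eventually.of_forall hbound)
      _ = 0 := htend.liminf_eq
  exact le_antisymm (key.trans hlim) zero_le

set_option maxHeartbeats 1000000 in
/-- Lemma 4 of the paper (Federer-type dimension reducing estimate): for `0 ≤ j ≤ n-1`
there is a function `β : (0,∞) → (0,∞)` with `β(t) → 0` as `t → 0` such that for every
`δ > 0`, any set `A ⊆ ℝⁿ` with the property that near each of its points, at all
sufficiently small scales `ρ`, `A` lies in the `δρ`-neighborhood of (a translate of)
some `j`-dimensional linear subspace, satisfies `H^{j+β(δ)}(A) = 0`. -/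
theorem dimension_reducing
    (n j : ℕ) (hn : 1 ≤ n) (hj : j ≤ n - 1) :
    ∃ β : ℝ → ℝ, (∀ t : ℝ, 0 < t → 0 < β t) ∧
      Tendsto β (nhdsWithin 0 (Ioi 0)) (nhds 0) ∧
      ∀ δ : ℝ, 0 < δ →
        ∀ A : Set (EuclideanSpace ℝ (Fin n)),
          (∀ y ∈ A, ∃ ε : ℝ, 0 < ε ∧ ∀ ρ ∈ Ioc (0 : ℝ) ε,
            ∃ L : Submodule ℝ (EuclideanSpace ℝ (Fin n)),
              Module.finrank ℝ L = j ∧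
              A ∩ ball y ρ ⊆
                {x : EuclideanSpace ℝ (Fin n) |
                  infDist (x - y) (L : Set (EuclideanSpace ℝ (Fin n))) < δ * ρ}) →
          μH[(j : ℝ) + β δ] A = 0 := by
  classical
  have hjn : j ≤ n := le_trans hj (Nat.sub_le n 1)
  set K : ℝ := 48 ^ (n + 1) with hK
  have hK0 : (0:ℝ) < K := by positivity
  have hK48 : (48:ℝ) ≤ K := by
    calc (48:ℝ) = 48 ^ 1 := (pow_one _).symm
      _ ≤ 48 ^ (n + 1) := by
        apply pow_le_pow_right₀ (by norm_num)
        omega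
  have hK1 : (1:ℝ) < K := by linarith
  have hlogK : 0 < Real.log K := Real.log_pos hK1
  refine ⟨fun t => if t < 1 / K then Real.log K / (-Real.log t) else (n + 1 : ℝ), ?_, ?_, ?_⟩
  · intro t ht
    show 0 < if t < 1 / K then Real.log K / (-Real.log t) else (n + 1 : ℝ)
    by_cases hcase : t < 1 / K
    · rw [if_pos hcase]
      have ht1 : t < 1 := by
        have : 1 / K ≤ 1 := by rw [div_le_one hK0]; linarith
        linarith
      have hlt : Real.log t < 0 := Real.log_neg ht ht1
      exact div_pos hlogK (by linarith)
    · rw [if_neg hcase]; positivity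
  · have hev : ∀ᶠ t in nhdsWithin (0:ℝ) (Ioi 0),
        Real.log K / (-Real.log t) =
        (if t < 1 / K then Real.log K / (-Real.log t) else (n + 1 : ℝ)) := by
      filter_upwards [Ioo_mem_nhdsGT_of_mem (by
        constructor
        · exact le_refl (0:ℝ)
        · positivity : (0:ℝ) ∈ Ico (0:ℝ) (1/K))] with t ht
      rw [if_pos ht.2]
    refine Tendsto.congr' hev ?_
    exact Tendsto.div_atTop tendsto_const_nhds
      (tendsto_neg_atBot_atTop.comp Real.tendsto_log_nhdsGT_zero)
  · intro δ hδ A hA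
    show μH[(j : ℝ) + (if δ < 1 / K then Real.log K / (-Real.log δ) else (n + 1 : ℝ))] A = 0
    by_cases hcase : δ < 1 / K
    · rw [if_pos hcase]
      set b : ℝ := Real.log K / (-Real.log δ) with hb
      have hδ1 : δ < 1 := by
        have : 1 / K ≤ 1 := by rw [div_le_one hK0]; linarith
        linarith
      have hlogδ : Real.log δ < 0 := Real.log_neg hδ hδ1
      have hb0 : 0 < b := div_pos hlogK (by linarith)
      have hb1 : b ≤ 1 := by
        rw [hb, div_le_one (by linarith)]
        have hKδ : K * δ < 1 := by
          have := (lt_div_iff₀ hK0).1 hcase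
          linarith
        have hlogKδ : Real.log (K * δ) < 0 := Real.log_neg (by positivity) hKδ
        rw [Real.log_mul (ne_of_gt hK0) hδ.ne'] at hlogKδ
        linarith
      have hδb : δ ^ b = 1 / K := by
        rw [Real.rpow_def_of_pos hδ]
        have hne : Real.log δ ≠ 0 := ne_of_lt hlogδ
        have hbl : Real.log δ * b = -Real.log K := by
          rw [hb, mul_comm, div_mul_eq_mul_div, div_neg, mul_div_assoc, div_self hne,
            mul_one]
        rw [hbl, Real.exp_neg, Real.exp_log hK0, one_div]
      have hδ8 : δ ≤ 1 / 8 := by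
        have : 1 / K ≤ 1 / 8 := by
          rw [div_le_div_iff₀ hK0 (by norm_num)]
          linarith
        linarith
      set s : ℝ := (j : ℝ) + b with hs
      have hs0 : 0 ≤ s := by positivity
      have h4δ0 : (0:ℝ) < 4 * δ := by linarith
      have hθ : (12 / δ) ^ j * (4 * δ) ^ s ≤ 1 / 2 := by
        have h1 : (4 * δ : ℝ) ^ s = (4 * δ) ^ (j : ℝ) * (4 * δ) ^ b := by
          rw [hs, Real.rpow_add h4δ0]
        have h2 : (4 * δ : ℝ) ^ (j : ℝ) = (4 * δ) ^ (j : ℕ) := Real.rpow_natCast _ j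
        have h3 : (12 / δ) ^ j * (4 * δ) ^ (j : ℕ) = (48 : ℝ) ^ j := by
          rw [← mul_pow]
          congr 1
          field_simp
          ring
        have h4 : (4 * δ : ℝ) ^ b = 4 ^ b * δ ^ b :=
          Real.mul_rpow (by norm_num) hδ.le
        have h5 : (4:ℝ) ^ b ≤ 4 := by
          calc (4:ℝ) ^ b ≤ 4 ^ (1:ℝ) :=
            Real.rpow_le_rpow_of_exponent_le (by norm_num) hb1
            _ = 4 := Real.rpow_one 4
        have h6 : (48:ℝ) ^ j ≤ 48 ^ n := pow_le_pow_right₀ (by norm_num) hjn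
        have h48n : (0:ℝ) < 48 ^ n := by positivity
        have hKval : K = 48 * 48 ^ n := by rw [hK, pow_succ]; ring
        have hb4 : (0:ℝ) < 4 ^ b := Real.rpow_pos_of_pos (by norm_num) b
        calc (12 / δ) ^ j * (4 * δ) ^ s
            = (48:ℝ) ^ j * (4 ^ b * δ ^ b) := by rw [h1, h2, h4, ← mul_assoc, h3]
          _ = (48:ℝ) ^ j * (4 ^ b * (1 / K)) := by rw [hδb]
          _ ≤ (48:ℝ) ^ n * (4 * (1 / K)) := by
              apply mul_le_mul h6
              · apply mul_le_mul_of_nonneg_right h5 (by positivity)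
              · positivity
              · positivity
          _ = 4 / 48 := by rw [hKval]; field_simp
          _ ≤ 1 / 2 := by norm_num
      set P : ℕ → Set (EuclideanSpace ℝ (Fin n)) := fun m =>
        {y | y ∈ A ∧ ∀ ρ : ℝ, 0 < ρ → ρ ≤ 1 / (m + 1) →
          ∃ L : Submodule ℝ (EuclideanSpace ℝ (Fin n)), Module.finrank ℝ L = j ∧
            A ∩ ball y ρ ⊆ {x | infDist (x - y) (L : Set (EuclideanSpace ℝ (Fin n))) < δ * ρ}}
        with hP
      have hAP : A ⊆ ⋃ m, P m := by
        intro y hy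
        obtain ⟨ε, hε, hερ⟩ := hA y hy
        obtain ⟨m, hm⟩ := exists_nat_one_div_lt hε
        exact mem_iUnion.2 ⟨m, hy, fun ρ hρ0 hρm => hερ ρ ⟨hρ0, hρm.trans hm.le⟩⟩
      refine measure_mono_null hAP (measure_iUnion_null fun m => ?_)
      have hr₀ : (0:ℝ) < 1 / (m + 1) := by positivity
      obtain ⟨D, hDc, hDd⟩ := TopologicalSpace.exists_countable_dense (EuclideanSpace ℝ (Fin n))
      have hcov : P m ⊆ ⋃ d ∈ D, P m ∩ ball d (1 / (m + 1) / 2) := by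
        intro y hy
        obtain ⟨d, hdD, hd⟩ := Metric.mem_closure_iff.1 (hDd y) _ (by positivity : (0:ℝ) < 1/(m+1)/2)
        exact mem_biUnion hdD ⟨hy, mem_ball.2 hd⟩
      refine measure_mono_null hcov ((measure_biUnion_null_iff hDc).2 fun d _ => ?_)
      rcases (P m ∩ ball d (1 / (m + 1) / 2)).eq_empty_or_nonempty with he | ⟨y₀, hy₀⟩
      · rw [he]; exact measure_empty
      · have hkey : μH[s] (P m ∩ ball y₀ (1 / (m + 1))) = 0 := by
          refine iter_zero hδ hδ8 hs0 hθ (P m) hr₀ y₀ hy₀.1 ?_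
          intro z hz ρ hρ0 hρr₀
          obtain ⟨L, hL1, hL2⟩ := hz.2 ρ hρ0 hρr₀
          exact ⟨L, hL1, fun x hx => hL2 ⟨hx.1.1, hx.2⟩⟩
        refine measure_mono_null (fun x hx => ?_) hkey
        refine ⟨hx.1, mem_ball.2 ?_⟩
        have h7 : dist x d < 1 / (m + 1) / 2 := mem_ball.1 hx.2
        have h8 : dist y₀ d < 1 / (m + 1) / 2 := mem_ball.1 hy₀.2
        calc dist x y₀ ≤ dist x d + dist d y₀ := dist_triangle _ _ _
          _ < 1 / (m + 1) := by rw [dist_comm d y₀]; linarith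
    · rw [if_neg hcase]
      have hdim : dimH A < ((j + n + 1 : ℕ) : ℝ≥0) := by
        calc dimH A ≤ dimH (univ : Set (EuclideanSpace ℝ (Fin n))) := dimH_mono (subset_univ A)
          _ = (n : ℝ≥0∞) := by rw [Real.dimH_univ_eq_finrank (EuclideanSpace ℝ (Fin n)), finrank_euclideanSpace_fin]
          _ < _ := by exact_mod_cast (by omega : n < j + n + 1)
      have h0 := hausdorffMeasure_of_dimH_lt hdim
      have heq : (((j + n + 1 : ℕ) : ℝ≥0) : ℝ) = (j : ℝ) + ((n : ℝ) + 1) := by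
        push_cast; ring
      rw [heq] at h0
      exact h0
end
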